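/- For real C > 1 and |β| < 1, one has √((C² − β)/(1 − β)) = C + 2·∑_{p≥1} β^p A_p(C), where A_p(C) = C^{1−2p} ∑_{q=0}^{p−1} binom(p−1,q)·binom(2q+1,q)·((C²−1)/4)^{q+1}. -/

import Mathlib

open Finset

lemma centralBinom_le_four_pow (n : ℕ) : (Nat.centralBinom n : ℝ) ≤ 4 ^ n := by
  have h : Nat.centralBinom n ≤ 4 ^ n := by
    have h1 : Nat.centralBinom n ≤ ∑ m ∈ range (2 * n + 1), (2 * n).choose m :=
      Finset.single_le_sum (f := fun m => (2 * n).choose m) (fun i _ => Nat.zero_le _)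
        (by simp [Finset.mem_range]; omega)
    have h2 : (∑ m ∈ range (2 * n + 1), (2 * n).choose m) = 2 ^ (2 * n) :=
      Nat.sum_range_choose (2 * n)
    calc Nat.centralBinom n ≤ 2 ^ (2 * n) := h1.trans_eq h2
      _ = 4 ^ n := by rw [pow_mul]; norm_num
  exact_mod_cast h

lemma summable_centralBinom {t : ℝ} (ht : |t| < 1 / 4) :
    Summable (fun n => (Nat.centralBinom n : ℝ) * t ^ n) := by
  have h4t : |4 * t| < 1 := by rw [abs_mul]; rw [abs_of_nonneg (by norm_num : (0:ℝ) ≤ 4)]; linarith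
  refine Summable.of_norm ?_
  have : Summable (fun n : ℕ => |4 * t| ^ n) := summable_geometric_of_lt_one (abs_nonneg _) h4t
  refine this.of_nonneg_of_le (fun n => norm_nonneg _) (fun n => ?_)
  have hb : (Nat.centralBinom n : ℝ) ≤ 4 ^ n := centralBinom_le_four_pow n
  calc ‖(Nat.centralBinom n : ℝ) * t ^ n‖ = (Nat.centralBinom n : ℝ) * |t| ^ n := by
        rw [norm_mul, Real.norm_eq_abs, Real.norm_eq_abs, abs_pow,
          abs_of_nonneg (by positivity : (0:ℝ) ≤ (Nat.centralBinom n : ℝ))]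
    _ ≤ 4 ^ n * |t| ^ n := mul_le_mul_of_nonneg_right hb (by positivity)
    _ = |4 * t| ^ n := by rw [abs_mul, abs_of_nonneg (by norm_num : (0:ℝ) ≤ 4), mul_pow]

lemma summable_centralBinom_deriv {y : ℝ} (hy : |y| < 1 / 4) :
    Summable (fun n => (Nat.centralBinom n : ℝ) * ((n : ℝ) * y ^ (n - 1))) := by
  have h4y : ‖4 * y‖ < 1 := by
    rw [Real.norm_eq_abs, abs_mul, abs_of_nonneg (by norm_num : (0:ℝ) ≤ 4)]; linarith
  refine Summable.of_norm ?_
  have husum : Summable (fun n : ℕ => (4:ℝ) * ((n:ℝ) * ‖4 * y‖ ^ (n - 1))) := by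
    apply Summable.mul_left
    rw [← summable_nat_add_iff 1]
    simp only [Nat.add_sub_cancel]
    have h1 : Summable (fun n : ℕ => ((n:ℝ) ^ 1) * ‖4 * y‖ ^ n) :=
      summable_pow_mul_geometric_of_norm_lt_one 1 (by rwa [norm_norm])
    have h2 : Summable (fun n : ℕ => ‖4 * y‖ ^ n) :=
      summable_geometric_of_norm_lt_one (by rwa [norm_norm])
    simpa [add_mul, pow_one] using h1.add h2
  refine husum.of_nonneg_of_le (fun n => norm_nonneg _) (fun n => ?_)
  have hb := centralBinom_le_four_pow n
  have h1 : ‖(Nat.centralBinom n : ℝ) * ((n:ℝ) * y ^ (n - 1))‖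
      = (Nat.centralBinom n : ℝ) * ((n:ℝ) * |y| ^ (n-1)) := by
    rw [norm_mul, norm_mul, Real.norm_eq_abs, Real.norm_eq_abs, Real.norm_eq_abs, abs_pow,
      abs_of_nonneg (by positivity : (0:ℝ) ≤ (Nat.centralBinom n : ℝ)),
      abs_of_nonneg (by positivity : (0:ℝ) ≤ (n:ℝ))]
  rw [h1]
  rcases Nat.eq_zero_or_pos n with h | h
  · subst h; simp
  · obtain ⟨m, rfl⟩ := Nat.exists_eq_succ_of_ne_zero h.ne'
    simp only [Nat.succ_sub_one]
    have : ‖4 * y‖ ^ m = 4 ^ m * |y| ^ m := by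
      rw [Real.norm_eq_abs, abs_mul, abs_of_nonneg (by norm_num : (0:ℝ) ≤ 4), mul_pow]
    rw [this]
    have hb' : (Nat.centralBinom (m+1) : ℝ) ≤ 4 * 4 ^ m := by
      have := centralBinom_le_four_pow (m+1); rwa [pow_succ, mul_comm (4 ^ m) 4] at this
    calc (Nat.centralBinom (m+1) : ℝ) * ((m+1 : ℕ) * |y| ^ m)
        ≤ (4 * 4 ^ m) * (((m+1 : ℕ):ℝ) * |y| ^ m) := by gcongr
      _ = 4 * (((m+1:ℕ):ℝ) * (4 ^ m * |y| ^ m)) := by ring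

noncomputable def Fcb : ℝ → ℝ := fun t => ∑' n, (Nat.centralBinom n : ℝ) * t ^ n

noncomputable def Dcb : ℝ → ℝ := fun y => ∑' n, (Nat.centralBinom n : ℝ) * ((n : ℝ) * y ^ (n - 1))

lemma hasDerivAt_Fcb {y : ℝ} (hy : |y| < 1 / 4) : HasDerivAt Fcb (Dcb y) y := by
  set r : ℝ := (|y| + 1/4) / 2 with hr
  have hy0 : 0 ≤ |y| := abs_nonneg y
  have hr1 : |y| < r := by rw [hr]; linarith
  have hr2 : r < 1/4 := by rw [hr]; linarith
  have hr0 : 0 < r := lt_of_le_of_lt hy0 hr1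
  have h4r : ‖4 * r‖ < 1 := by
    rw [Real.norm_eq_abs, abs_of_nonneg (by positivity)]; linarith
  have husum : Summable (fun n : ℕ => (4:ℝ) * ((n:ℝ) * (4*r) ^ (n - 1))) := by
    apply Summable.mul_left
    rw [← summable_nat_add_iff 1]
    simp only [Nat.add_sub_cancel]
    have h1 : Summable (fun n : ℕ => ((n:ℝ) ^ 1) * (4*r) ^ n) :=
      summable_pow_mul_geometric_of_norm_lt_one 1 h4r
    have h2 : Summable (fun n : ℕ => (4*r) ^ n) := summable_geometric_of_norm_lt_one h4r
    simpa [add_mul, pow_one] using h1.add h2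
  have key := hasDerivAt_tsum_of_isPreconnected
    (g := fun (n : ℕ) (t : ℝ) => (Nat.centralBinom n : ℝ) * t ^ n)
    (g' := fun (n : ℕ) (z : ℝ) => (Nat.centralBinom n : ℝ) * ((n:ℝ) * z ^ (n - 1)))
    (u := fun n : ℕ => (4:ℝ) * ((n:ℝ) * (4*r) ^ (n - 1)))
    (t := Set.Ioo (-r) r) (y₀ := 0) (y := y)
    husum (isOpen_Ioo) (isPreconnected_Ioo) (fun n z _ => ?_) (fun n z hz => ?_) ?_ ?_ ?_
  · exact key
  · exact (hasDerivAt_pow n z).const_mul _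
  · have hz' : |z| ≤ r := by
      rw [abs_le]; constructor <;> [linarith [hz.1]; linarith [hz.2]]
    have h1 : ‖(Nat.centralBinom n : ℝ) * ((n:ℝ) * z ^ (n - 1))‖
        ≤ (4:ℝ) ^ n * ((n:ℝ) * r ^ (n-1)) := by
      rw [norm_mul, norm_mul, Real.norm_eq_abs, Real.norm_eq_abs, Real.norm_eq_abs,
        abs_of_nonneg (by positivity : (0:ℝ) ≤ (Nat.centralBinom n : ℝ)),
        abs_of_nonneg (by positivity : (0:ℝ) ≤ (n:ℝ)), abs_pow]
      have h1 : |z| ^ (n-1) ≤ r ^ (n-1) := pow_le_pow_left₀ (abs_nonneg z) hz' _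
      have := centralBinom_le_four_pow n
      gcongr
    refine h1.trans ?_
    rcases Nat.eq_zero_or_pos n with h | h
    · subst h; simp
    · obtain ⟨m, rfl⟩ := Nat.exists_eq_succ_of_ne_zero h.ne'
      simp only [Nat.succ_sub_one, mul_pow, pow_succ]
      ring_nf
      exact le_refl _
  · exact Set.mem_Ioo.2 ⟨by linarith, by linarith⟩
  · exact summable_centralBinom (by rw [abs_zero]; norm_num)
  · exact Set.mem_Ioo.2 ⟨by cases abs_lt.1 hr1; linarith, by cases abs_lt.1 hr1; linarith⟩

lemma ode_Fcb {y : ℝ} (hy : |y| < 1 / 4) : (1 - 4 * y) * Dcb y = 2 * Fcb y := by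
  have hsd : HasSum (fun n => (Nat.centralBinom n : ℝ) * ((n : ℝ) * y ^ (n - 1))) (Dcb y) :=
    (summable_centralBinom_deriv hy).hasSum
  have h1 : HasSum (fun n => (Nat.centralBinom (n+1) : ℝ) * (((n:ℝ)+1) * y ^ n)) (Dcb y) := by
    have := (hasSum_nat_add_iff
      (f := fun n => (Nat.centralBinom n : ℝ) * ((n : ℝ) * y ^ (n - 1))) 1).2 (by simpa using hsd)
    simpa using this
  have h1' : HasSum (fun n : ℕ => (4 * (n:ℝ) + 2) * ((Nat.centralBinom n : ℝ) * y ^ n)) (Dcb y) := by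
    refine h1.congr_fun fun n => ?_
    have hnat : ((n:ℕ)+1) * Nat.centralBinom (n+1) = 2 * (2*n+1) * Nat.centralBinom n :=
      Nat.succ_mul_centralBinom_succ n
    have hcast : ((n:ℝ)+1) * (Nat.centralBinom (n+1) : ℝ)
        = (2 * (2*(n:ℝ)+1)) * (Nat.centralBinom n : ℝ) := by exact_mod_cast hnat
    calc (4 * (n:ℝ) + 2) * ((Nat.centralBinom n : ℝ) * y ^ n)
        = ((2 * (2*(n:ℝ)+1)) * (Nat.centralBinom n : ℝ)) * y ^ n := by ring
      _ = (((n:ℝ)+1) * (Nat.centralBinom (n+1) : ℝ)) * y ^ n := by rw [hcast]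
      _ = (Nat.centralBinom (n+1) : ℝ) * (((n:ℝ)+1) * y ^ n) := by ring
  have h2 : HasSum (fun n : ℕ => (4 * (n:ℝ)) * ((Nat.centralBinom n : ℝ) * y ^ n)) (Dcb y * (4 * y)) := by
    refine (hsd.mul_right (4 * y)).congr_fun fun n => ?_
    rcases Nat.eq_zero_or_pos n with h | h
    · subst h; simp
    · obtain ⟨m, rfl⟩ := Nat.exists_eq_succ_of_ne_zero h.ne'
      simp only [Nat.succ_sub_one, pow_succ]
      push_cast
      ring
  have h3 := h1'.sub h2
  have h3' : HasSum (fun n : ℕ => 2 * ((Nat.centralBinom n : ℝ) * y ^ n))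
      (Dcb y - Dcb y * (4 * y)) := by
    refine h3.congr_fun fun n => ?_; ring
  have h4 : HasSum (fun n : ℕ => 2 * ((Nat.centralBinom n : ℝ) * y ^ n)) (2 * Fcb y) :=
    (summable_centralBinom hy).hasSum.mul_left 2
  have := h3'.unique h4
  linarith [this]

lemma Fcb_eq {t : ℝ} (ht : |t| < 1 / 4) : Fcb t * Real.sqrt (1 - 4 * t) = 1 := by
  have hgd : ∀ y : ℝ, |y| < 1/4 → HasDerivAt (fun s => Fcb s * Real.sqrt (1 - 4 * s)) 0 y := by
    intro y hy
    have hu : 0 < 1 - 4 * y := by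
      have := abs_lt.1 hy; linarith
    have hsu : Real.sqrt (1 - 4*y) > 0 := Real.sqrt_pos.2 hu
    have hlin : HasDerivAt (fun s : ℝ => 1 - 4 * s) (-4) y := by
      simpa using ((hasDerivAt_id y).const_mul (4:ℝ)).const_sub 1
    have hsq : HasDerivAt (fun s : ℝ => Real.sqrt (1 - 4 * s))
        (1 / (2 * Real.sqrt (1 - 4*y)) * (-4)) y :=
      (Real.hasDerivAt_sqrt hu.ne').comp y hlin
    have hmul := (hasDerivAt_Fcb hy).mul hsq
    have hval : Dcb y * Real.sqrt (1 - 4*y) + Fcb y * (1 / (2 * Real.sqrt (1 - 4*y)) * (-4)) = 0 := by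
      have hode := ode_Fcb hy
      have hss : Real.sqrt (1 - 4*y) * Real.sqrt (1 - 4*y) = 1 - 4*y :=
        Real.mul_self_sqrt hu.le
      field_simp
      linear_combination 2 * Dcb y * hss + 2 * hode
    rw [hval] at hmul
    exact hmul
  have key : ∀ s : ℝ, |s| < 1/4 → Fcb s * Real.sqrt (1 - 4*s) = Fcb 0 * Real.sqrt 1 := by
    intro s hs
    rcases le_or_gt 0 s with h | h
    · have := constant_of_has_deriv_right_zero (f := fun s => Fcb s * Real.sqrt (1 - 4 * s))
        (a := 0) (b := s) ?_ ?_ s (Set.right_mem_Icc.2 h)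
      · simpa using this
      · intro x hx
        have hx' : |x| < 1/4 := by
          rw [abs_lt]; exact ⟨by linarith [hx.1], by linarith [hx.2, abs_lt.1 hs]⟩
        exact (hgd x hx').continuousAt.continuousWithinAt
      · intro x hx
        have hx' : |x| < 1/4 := by
          rw [abs_lt]; exact ⟨by linarith [hx.1], by linarith [hx.2, abs_lt.1 hs]⟩
        exact (hgd x hx').hasDerivWithinAt
    · have := constant_of_has_deriv_right_zero (f := fun s => Fcb s * Real.sqrt (1 - 4 * s))
        (a := s) (b := 0) ?_ ?_ 0 (Set.right_mem_Icc.2 h.le)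
      · simpa using this.symm
      · intro x hx
        have hx' : |x| < 1/4 := by
          rw [abs_lt]; exact ⟨by linarith [hx.1, abs_lt.1 hs], by linarith [hx.2]⟩
        exact (hgd x hx').continuousAt.continuousWithinAt
      · intro x hx
        have hx' : |x| < 1/4 := by
          rw [abs_lt]; exact ⟨by linarith [hx.1, abs_lt.1 hs], by linarith [hx.2]⟩
        exact (hgd x hx').hasDerivWithinAt
  have hF0 : Fcb 0 = 1 := by
    have : HasSum (fun n => (Nat.centralBinom n : ℝ) * (0:ℝ) ^ n)
        ((Nat.centralBinom 0 : ℝ) * (0:ℝ) ^ 0) := by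
      refine hasSum_single 0 fun n hn => ?_
      rw [zero_pow hn, mul_zero]
    have h := this.tsum_eq
    simpa [Fcb, Nat.centralBinom] using h
  have := key t ht
  rw [hF0, Real.sqrt_one, one_mul] at this
  simpa using this

lemma hasSum_centralBinom {t : ℝ} (ht : |t| < 1 / 4) :
    HasSum (fun n => (Nat.centralBinom n : ℝ) * t ^ n) (1 / Real.sqrt (1 - 4 * t)) := by
  have hu : 0 < 1 - 4 * t := by have := abs_lt.1 ht; linarith
  have hsu : 0 < Real.sqrt (1 - 4 * t) := Real.sqrt_pos.2 hu
  have h := (summable_centralBinom ht).hasSum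
  have hFt : Fcb t = 1 / Real.sqrt (1 - 4 * t) := by
    have := Fcb_eq ht
    field_simp at this ⊢
    linarith [this]
  rwa [show (∑' n, (Nat.centralBinom n : ℝ) * t ^ n) = Fcb t from rfl, hFt] at h


lemma centralBinom_succ_eq (q : ℕ) : Nat.centralBinom (q + 1) = 2 * (2 * q + 1).choose q := by
  have h1 : Nat.centralBinom (q+1) = ((2*q+1)+1).choose (q+1) := by
    unfold Nat.centralBinom; congr 1
  rw [h1, Nat.choose_succ_succ]
  have h2 : (2*q+1).choose (q+1) = (2*q+1).choose q := by
    have h3 := Nat.choose_symm (n := 2*q+1) (k := q+1) (by omega)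
    rw [show 2*q+1-(q+1) = q by omega] at h3
    exact h3.symm
  simp only [Nat.succ_eq_add_one]
  rw [h2]
  omega

lemma choose_two_succ_le (q : ℕ) : ((2 * q + 1).choose q : ℝ) ≤ 2 * 4 ^ q := by
  have h : (2*q+1).choose q ≤ 2 ^ (2*q+1) := by
    calc (2*q+1).choose q ≤ ∑ m ∈ range (2*q+1+1), (2*q+1).choose m :=
        Finset.single_le_sum (f := fun m => (2*q+1).choose m) (fun i _ => Nat.zero_le _)
          (by simp [Finset.mem_range]; omega)
      _ = 2 ^ (2*q+1) := Nat.sum_range_choose (2*q+1)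
  calc ((2 * q + 1).choose q : ℝ) ≤ (2 : ℝ) ^ (2*q+1) := by exact_mod_cast h
    _ = 2 * 4 ^ q := by rw [pow_succ, pow_mul]; norm_num; ring

/-- The coefficients `A_p(C)`, defined for `p ≥ 1`. -/
noncomputable def Acoef (C : ℝ) (p : ℕ) : ℝ :=
  C ^ ((1 : ℤ) - 2 * p) *
    ∑ q ∈ Finset.range p,
      (Nat.choose (p - 1) q : ℝ) * (Nat.choose (2 * q + 1) q : ℝ) *
        ((C ^ 2 - 1) / 4) ^ (q + 1)

theorem sqrt_series_expansion (C β : ℝ) (hC : 1 < C) (hβ : |β| < 1) :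
    HasSum (fun p : ℕ => 2 * β ^ (p + 1) * Acoef C (p + 1))
      (Real.sqrt ((C ^ 2 - β) / (1 - β)) - C) := by
  have hC0 : 0 < C := lt_trans one_pos hC
  have hC2 : 1 < C ^ 2 := by nlinarith
  obtain ⟨hβ2, hβ1⟩ := abs_lt.1 hβ
  have h1β : 0 < 1 - β := by linarith
  have hC2β : 0 < C ^ 2 - β := by linarith
  set x : ℝ := (C ^ 2 - 1) / 4 with hxdef
  set z : ℝ := β / C ^ 2 with hzdef
  set y : ℝ := β * (C ^ 2 - 1) / (4 * (C ^ 2 - β)) with hydef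
  have hx0 : 0 < x := by rw [hxdef]; linarith
  have hzabs : |z| < 1 := by
    rw [hzdef, abs_div, abs_of_pos (by positivity : (0:ℝ) < C ^ 2)]
    rw [div_lt_one (by positivity)]
    calc |β| < 1 := hβ
      _ < C ^ 2 := hC2
  have hznorm : ‖z‖ < 1 := by rwa [Real.norm_eq_abs]
  have h1z : 1 - z = (C ^ 2 - β) / C ^ 2 := by
    rw [hzdef]; field_simp
  have h1z0 : 0 < 1 - z := by rw [h1z]; positivity
  have hy14 : |y| < 1 / 4 := by
    rw [abs_lt]; constructor
    · rw [hydef, lt_div_iff₀ (by positivity : (0:ℝ) < 4 * (C ^ 2 - β))]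
      nlinarith [abs_nonneg β]
    · rw [hydef, div_lt_iff₀ (by positivity : (0:ℝ) < 4 * (C ^ 2 - β))]
      nlinarith [abs_nonneg β]
  have hxy : x * z / (1 - z) = y := by
    rw [hxdef, hzdef, hydef]
    rw [h1z]
    field_simp
  clear_value x z y
  -- The double-indexed family
  set G : ℕ × ℕ → ℝ := fun qm =>
    2 * C * ((2 * qm.1 + 1).choose qm.1 : ℝ) * x ^ (qm.1 + 1) *
      (((qm.2 + qm.1).choose qm.1 : ℝ) * z ^ (qm.2 + qm.1 + 1)) with hGdef
  set Rq : ℕ → ℝ := fun q => 2 * C * ((2 * q + 1).choose q : ℝ) * y ^ (q + 1) with hRdef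
  -- fiberwise sums over m
  have hfiber : ∀ q : ℕ, HasSum (fun m : ℕ => G (q, m)) (Rq q) := by
    intro q
    have h0 := hasSum_choose_mul_geometric_of_norm_lt_one (𝕜 := ℝ) q hznorm
    have h1 := h0.mul_left (2 * C * ((2 * q + 1).choose q : ℝ) * x ^ (q + 1) * z ^ (q + 1))
    have heq : ∀ m : ℕ,
        G (q, m) = 2 * C * ((2 * q + 1).choose q : ℝ) * x ^ (q + 1) * z ^ (q + 1) *
          (((m + q).choose q : ℝ) * z ^ m) := by
      intro m
      rw [hGdef]
      simp only
      rw [show (m + q + 1 : ℕ) = m + (q + 1) by ring, pow_add z m (q+1)]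
      ring
    have hval : 2 * C * ((2 * q + 1).choose q : ℝ) * x ^ (q + 1) * z ^ (q + 1) *
        (1 / (1 - z) ^ (q + 1)) = Rq q := by
      rw [hRdef]
      simp only
      rw [← hxy, div_pow, mul_pow]
      field_simp
    rw [← hval]
    exact h1.congr_fun fun m => (heq m)
  -- the sum of the Rq's
  have hR : HasSum Rq (Real.sqrt ((C ^ 2 - β) / (1 - β)) - C) := by
    set L : ℝ := 1 / Real.sqrt (1 - 4 * y) with hLdef
    have h0 := hasSum_centralBinom hy14
    have h1 : HasSum (fun q : ℕ => (Nat.centralBinom (q + 1) : ℝ) * y ^ (q + 1)) (L - 1) := by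
      refine (hasSum_nat_add_iff (f := fun n => (Nat.centralBinom n : ℝ) * y ^ n) 1).2 ?_
      convert h0 using 1
      · rfl
      simp [Nat.centralBinom, hLdef]
    have h2 : HasSum Rq (C * (L - 1)) := by
      refine (h1.mul_left C).congr_fun fun q => ?_
      rw [hRdef]
      simp only
      rw [centralBinom_succ_eq q]
      push_cast
      ring
    have h14y : 1 - 4 * y = C ^ 2 * (1 - β) / (C ^ 2 - β) := by
      rw [hydef]; field_simp; ring
    have h14y0 : 0 < 1 - 4 * y := by
      rw [h14y]; positivity
    have hsq0 : 0 < Real.sqrt (1 - 4 * y) := Real.sqrt_pos.2 h14y0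
    have hprod : Real.sqrt ((C ^ 2 - β) / (1 - β)) * Real.sqrt (1 - 4 * y) = C := by
      rw [← Real.sqrt_mul (by positivity : (0:ℝ) ≤ (C ^ 2 - β) / (1 - β))]
      rw [h14y]
      rw [show (C ^ 2 - β) / (1 - β) * (C ^ 2 * (1 - β) / (C ^ 2 - β)) = C ^ 2 by
        field_simp]
      exact Real.sqrt_sq hC0.le
    have hfin : C * (L - 1) = Real.sqrt ((C ^ 2 - β) / (1 - β)) - C := by
      rw [hLdef]
      have : Real.sqrt ((C ^ 2 - β) / (1 - β)) = C / Real.sqrt (1 - 4 * y) := by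
        rw [eq_div_iff hsq0.ne']; exact hprod
      rw [this]
      field_simp
    rwa [hfin] at h2
  -- summability of G
  have hchle : ∀ q m : ℕ, (0:ℝ) ≤ ((2 * q + 1).choose q : ℝ) := fun q m => by positivity
  set y' : ℝ := x * |z| / (1 - |z|) with hy'def
  have h1z' : 0 < 1 - |z| := by linarith
  have hy'0 : 0 ≤ y' := by positivity
  have habsz : |z| = |β| / C ^ 2 := by
    rw [hzdef, abs_div, abs_of_pos (by positivity : (0:ℝ) < C ^ 2)]
  have hC2b' : 0 < C ^ 2 - |β| := by linarith
  have h4y'eq : 4 * y' = |β| * (C ^ 2 - 1) / (C ^ 2 - |β|) := by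
    rw [hy'def, habsz, hxdef]
    rw [show 1 - |β| / C ^ 2 = (C ^ 2 - |β|) / C ^ 2 by field_simp]
    field_simp
  have h4y' : 4 * y' < 1 := by
    rw [h4y'eq, div_lt_one hC2b']
    nlinarith [abs_nonneg β]
  have hCne : C ≠ 0 := hC0.ne'
  -- the norm of G
  set N : ℕ × ℕ → ℝ := fun qm =>
    2 * C * ((2 * qm.1 + 1).choose qm.1 : ℝ) * x ^ (qm.1 + 1) *
      (((qm.2 + qm.1).choose qm.1 : ℝ) * |z| ^ (qm.2 + qm.1 + 1)) with hNdef
  have hNnonneg : ∀ pq : ℕ × ℕ, 0 ≤ N pq := by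
    rintro ⟨q, m⟩
    rw [hNdef]
    simp only
    have h1 : (0:ℝ) ≤ 2 * C * ((2 * q + 1).choose q : ℝ) := by positivity
    have h2 : (0:ℝ) ≤ x ^ (q + 1) := pow_nonneg hx0.le _
    have h3 : (0:ℝ) ≤ ((m + q).choose q : ℝ) * |z| ^ (m + q + 1) := by positivity
    exact mul_nonneg (mul_nonneg h1 h2) h3
  have hGN : ∀ pq : ℕ × ℕ, ‖G pq‖ = N pq := by
    rintro ⟨q, m⟩
    rw [hGdef, hNdef]
    simp only [Real.norm_eq_abs]
    rw [abs_mul, abs_mul, abs_mul, abs_mul, abs_mul, abs_pow, abs_pow,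
      abs_of_nonneg hx0.le, abs_of_pos hC0, abs_two,
      abs_of_nonneg (by positivity : (0:ℝ) ≤ ((2 * q + 1).choose q : ℝ)),
      abs_of_nonneg (by positivity : (0:ℝ) ≤ ((m + q).choose q : ℝ))]
  -- row sums of N
  have hznorm' : ‖|z|‖ < 1 := by rwa [Real.norm_eq_abs, abs_abs]
  have hxy' : x * |z| / (1 - |z|) = y' := rfl
  set Rq' : ℕ → ℝ := fun q => 2 * C * ((2 * q + 1).choose q : ℝ) * y' ^ (q + 1) with hR'def
  have hNrow : ∀ q : ℕ, HasSum (fun m : ℕ => N (q, m)) (Rq' q) := by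
    intro q
    have h0 := hasSum_choose_mul_geometric_of_norm_lt_one (𝕜 := ℝ) q hznorm'
    have h1 := h0.mul_left (2 * C * ((2 * q + 1).choose q : ℝ) * x ^ (q + 1) * |z| ^ (q + 1))
    have heq : ∀ m : ℕ,
        N (q, m) = 2 * C * ((2 * q + 1).choose q : ℝ) * x ^ (q + 1) * |z| ^ (q + 1) *
          (((m + q).choose q : ℝ) * |z| ^ m) := by
      intro m
      rw [hNdef]
      simp only
      rw [show (m + q + 1 : ℕ) = m + (q + 1) by ring, pow_add |z| m (q+1)]
      ring
    have hval : 2 * C * ((2 * q + 1).choose q : ℝ) * x ^ (q + 1) * |z| ^ (q + 1) *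
        (1 / (1 - |z|) ^ (q + 1)) = Rq' q := by
      rw [hR'def]
      simp only
      rw [← hxy', div_pow, mul_pow]
      field_simp
    rw [← hval]
    exact h1.congr_fun fun m => (heq m)
  have hRq'sum : Summable Rq' := by
    have hb : Summable (fun q : ℕ => (4 * C * y') * (4 * y') ^ q) :=
      (summable_geometric_of_lt_one (by positivity) h4y').mul_left _
    refine hb.of_nonneg_of_le (fun q => ?_) (fun q => ?_)
    · rw [hR'def]; simp only
      have h1 : (0:ℝ) ≤ 2 * C * ((2 * q + 1).choose q : ℝ) := by positivity
      exact mul_nonneg h1 (pow_nonneg hy'0 _)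
    · rw [hR'def]; simp only
      calc 2 * C * ((2 * q + 1).choose q : ℝ) * y' ^ (q + 1)
          ≤ 2 * C * (2 * 4 ^ q) * y' ^ (q + 1) := by
            have := choose_two_succ_le q
            have h2 : (0:ℝ) ≤ y' ^ (q + 1) := pow_nonneg hy'0 _
            gcongr
        _ = (4 * C * y') * (4 * y') ^ q := by
            rw [pow_succ, mul_pow]
            ring
  have hNsum : Summable N := by
    rw [summable_prod_of_nonneg hNnonneg]
    refine ⟨fun q => (hNrow q).summable, ?_⟩
    exact hRq'sum.congr fun q => ((hNrow q).tsum_eq).symm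
  have hGsummable : Summable G :=
    Summable.of_norm (hNsum.congr fun pq => (hGN pq).symm)
  have hGS : HasSum G (Real.sqrt ((C ^ 2 - β) / (1 - β)) - C) := by
    have h := hGsummable.hasSum
    have h2 : HasSum Rq (∑' pq, G pq) := h.prod_fiberwise hfiber
    rwa [h2.unique hR] at h
  -- reindex, summing over antidiagonals
  set H : ℕ × ℕ → ℝ := fun pq =>
    if pq.2 ≤ pq.1 then
      2 * C * ((2 * pq.2 + 1).choose pq.2 : ℝ) * x ^ (pq.2 + 1) *
        ((pq.1.choose pq.2 : ℝ) * z ^ (pq.1 + 1))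
    else 0 with hHdef
  have hinj : Function.Injective (fun qm : ℕ × ℕ => (qm.2 + qm.1, qm.1)) := by
    rintro ⟨q1, m1⟩ ⟨q2, m2⟩ hab
    simp only [Prod.mk.injEq] at hab
    obtain ⟨h1, h2⟩ := hab
    exact Prod.ext_iff.2 ⟨by omega, by omega⟩
  have hH0 : ∀ pq : ℕ × ℕ, pq ∉ Set.range (fun qm : ℕ × ℕ => (qm.2 + qm.1, qm.1)) → H pq = 0 := by
    rintro ⟨p, q⟩ hpq
    rw [hHdef]
    simp only
    split_ifs with h
    · exfalso
      exact hpq ⟨(q, p - q), by simp; omega⟩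
    · rfl
  have hHG : ∀ qm : ℕ × ℕ, H (qm.2 + qm.1, qm.1) = G qm := by
    rintro ⟨q, m⟩
    rw [hHdef, hGdef]
    simp only
    rw [if_pos (by omega : q ≤ m + q)]
  have hHsum : HasSum H (Real.sqrt ((C ^ 2 - β) / (1 - β)) - C) := by
    refine (Function.Injective.hasSum_iff hinj hH0).1 (hGS.congr_fun fun qm => ?_)
    show H (qm.2 + qm.1, qm.1) = G qm
    exact hHG qm
  -- final fiberwise decomposition
  refine hHsum.prod_fiberwise fun p => ?_
  have hvanish : ∀ q : ℕ, q ∉ Finset.range (p + 1) → H (p, q) = 0 := by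
    intro q hq
    rw [hHdef]
    simp only
    rw [if_neg]
    simp only [Finset.mem_range] at hq
    omega
  have hfin : HasSum (fun q => H (p, q)) (∑ q ∈ Finset.range (p + 1), H (p, q)) :=
    hasSum_sum_of_ne_finset_zero hvanish
  have hE : C ^ ((1:ℤ) - 2 * ((p + 1 : ℕ) : ℤ)) = C / C ^ (2 * (p + 1)) := by
    rw [zpow_sub₀ hCne, zpow_one,
      show (2 * (((p + 1) : ℕ) : ℤ)) = ((2 * (p + 1) : ℕ) : ℤ) by push_cast; ring,
      zpow_natCast]
  have hsum_eq : (2:ℝ) * β ^ (p + 1) * Acoef C (p + 1) = ∑ q ∈ Finset.range (p + 1), H (p, q) := by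
    rw [Acoef, ← hxdef]
    rw [Finset.mul_sum, Finset.mul_sum]
    refine Finset.sum_congr rfl fun q hq => ?_
    rw [hHdef]
    simp only
    rw [if_pos (by simp only [Finset.mem_range] at hq; omega : q ≤ p)]
    simp only [Nat.add_sub_cancel]
    rw [hE, hzdef, div_pow]
    have hpow2 : (C ^ 2) ^ (p + 1) = C ^ (2 * (p + 1)) := by rw [← pow_mul]
    rw [hpow2]
    have hCp : (C : ℝ) ^ (2 * (p + 1)) ≠ 0 := pow_ne_zero _ hCne
    field_simp
  rw [hsum_eq]
  exact hfin
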